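/- Let R be a commutative ring, d : ℚ̂ → R multiplicative with image containing no zero divisors, and F an FRF with determinant d. Fix α ∈ ℚ with parents γ_L, γ_R, and define the bi-infinite sequence β_{-k} = γ_L ⊕^{k-1} α (k ≥ 1), β_k = γ_R ⊕^k α (k ≥ 0), with β_{-1} = γ_L, β_0 = γ_R. With M_α = [[0,1],[-d(α),F(α)]], for all n < -1 one has M_α^n (F(β_0), F(β_1))ᵀ = ( F(β_n)/(d(β_{-1}) d(α)^{-n-1}), F(β_{n+1})/(d(β_{-1}) d(α)^{-n-2}) )ᵀ, while for n ≥ 0 it equals (F(β_n), F(β_{n+1}))ᵀ and for n = -1 it equals (F(β_{-1})/d(β_{-1}), F(β_0))ᵀ. -/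

import Mathlib

/-- Two fractions `a/b`, `c/d` form a Farey pair when `a*d - b*c = ±1`. -/
def FareyPair (a b : ℤ × ℤ) : Prop :=
  a.1 * b.2 - a.2 * b.1 = 1 ∨ a.1 * b.2 - a.2 * b.1 = -1

/-- An extended rational: a fraction in lowest terms with nonnegative denominator,
where the fraction with denominator `0` is `1/0 = ∞`. -/
def IsExtRat (v : ℤ × ℤ) : Prop :=
  0 ≤ v.2 ∧ Int.gcd v.1 v.2 = 1 ∧ (v.2 = 0 → v.1 = 1)

/-- The set `ℚ̂ = ℚ ∪ {1/0}` of extended rationals. -/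
def ExtRat : Type := {v : ℤ × ℤ // IsExtRat v}

lemma FRF_addsmul (w u : ℤ × ℤ) (a b : ℤ) (h : a = b + 1) :
    w + a • u = (w + b • u) + u := by
  have : a • u = b • u + u := by rw [h, add_smul, one_smul]
  rw [this, add_assoc]

lemma FRF_vec2_eq {L : Type*} (a b c e : L) (h1 : a = c) (h2 : b = e) :
    ![a, b] = ![c, e] := by rw [h1, h2]

lemma FRF_mulvec2 (L : Type*) [CommRing L] (a b : L) (x : Fin 2 → L) :
    (!![0, 1; a, b] : Matrix (Fin 2) (Fin 2) L).mulVec x = ![x 1, a * x 0 + b * x 1] := by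
  funext i
  fin_cases i <;> simp [Matrix.mulVec, dotProduct, Fin.sum_univ_two]

/-- Wrapping an FRF with multiplicative determinant `d` (whose image contains no zero
divisors) around the boundary triangle of `α ∈ ℚ`.  In the localization `K` of `R` at
its nonzero divisors, with `M_α = [[0,1],[-d(α),F(α)]]` and the wrapped sequence
`β_{-k} = γ_L ⊕^{k-1} α`, `β_k = γ_R ⊕^k α`, one has:
`M_α^n (F β_0, F β_1)ᵀ = (F β_n, F β_{n+1})ᵀ` for `n ≥ 0`, equals
`(F(β_{-1})/d(β_{-1}), F(β_0))ᵀ` for `n = -1`, and equals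
`(F(β_n)/(d(β_{-1}) d(α)^{-n-1}), F(β_{n+1})/(d(β_{-1}) d(α)^{-n-2}))ᵀ` for `n < -1`
(the divisions stated multiplicatively, which is equivalent since the relevant elements
are units in `K`). -/
theorem FRF_wraps_around_triangle (R : Type*) [CommRing R] (d F : ExtRat → R)
    (hd : ∀ α γ : ExtRat, FareyPair α.val γ.val →
      ∀ m : ExtRat, m.val = α.val + γ.val → d m = d α * d γ)
    (hnzd : ∀ v : ExtRat, d v ∈ nonZeroDivisors R)
    (hF : ∀ α γ : ExtRat, FareyPair α.val γ.val →
      ∀ m m2 : ExtRat, m.val = γ.val + α.val → m2.val = γ.val + α.val + α.val →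
        F m2 = -d α * F γ + F α * F m)
    (α γL γR : ExtRat) (hα : 0 < α.val.2)
    (hpar : FareyPair γL.val γR.val) (hmed : α.val = γL.val + γR.val)
    (hleft : γL.val.1 * α.val.2 < γL.val.2 * α.val.1)
    (hright : α.val.1 * γR.val.2 < α.val.2 * γR.val.1)
    (β : ℤ → ExtRat)
    (hβpos : ∀ n : ℤ, 0 ≤ n → (β n).val = γR.val + n • α.val)
    (hβneg : ∀ n : ℤ, n < 0 → (β n).val = γL.val + (-n - 1) • α.val) :
    ∀ n : ℤ,
      (0 ≤ n →
        ((!![0, 1; -(algebraMap R (Localization (nonZeroDivisors R)) (d α)),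
              algebraMap R (Localization (nonZeroDivisors R)) (F α)] :
            Matrix (Fin 2) (Fin 2) (Localization (nonZeroDivisors R))) ^ n).mulVec
            ![algebraMap R (Localization (nonZeroDivisors R)) (F (β 0)),
              algebraMap R (Localization (nonZeroDivisors R)) (F (β 1))] =
          ![algebraMap R (Localization (nonZeroDivisors R)) (F (β n)),
            algebraMap R (Localization (nonZeroDivisors R)) (F (β (n + 1)))]) ∧
      (n = -1 →
        algebraMap R (Localization (nonZeroDivisors R)) (d (β (-1))) *
            ((!![0, 1; -(algebraMap R (Localization (nonZeroDivisors R)) (d α)),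
                  algebraMap R (Localization (nonZeroDivisors R)) (F α)] :
                Matrix (Fin 2) (Fin 2) (Localization (nonZeroDivisors R))) ^ n).mulVec
              ![algebraMap R (Localization (nonZeroDivisors R)) (F (β 0)),
                algebraMap R (Localization (nonZeroDivisors R)) (F (β 1))] 0 =
          algebraMap R (Localization (nonZeroDivisors R)) (F (β (-1))) ∧
        ((!![0, 1; -(algebraMap R (Localization (nonZeroDivisors R)) (d α)),
              algebraMap R (Localization (nonZeroDivisors R)) (F α)] :
            Matrix (Fin 2) (Fin 2) (Localization (nonZeroDivisors R))) ^ n).mulVec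
            ![algebraMap R (Localization (nonZeroDivisors R)) (F (β 0)),
              algebraMap R (Localization (nonZeroDivisors R)) (F (β 1))] 1 =
          algebraMap R (Localization (nonZeroDivisors R)) (F (β 0))) ∧
      (n < -1 →
        (algebraMap R (Localization (nonZeroDivisors R)) (d (β (-1))) *
              algebraMap R (Localization (nonZeroDivisors R)) (d α) ^ (-n - 1).toNat) *
            ((!![0, 1; -(algebraMap R (Localization (nonZeroDivisors R)) (d α)),
                  algebraMap R (Localization (nonZeroDivisors R)) (F α)] :
                Matrix (Fin 2) (Fin 2) (Localization (nonZeroDivisors R))) ^ n).mulVec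
              ![algebraMap R (Localization (nonZeroDivisors R)) (F (β 0)),
                algebraMap R (Localization (nonZeroDivisors R)) (F (β 1))] 0 =
          algebraMap R (Localization (nonZeroDivisors R)) (F (β n)) ∧
        (algebraMap R (Localization (nonZeroDivisors R)) (d (β (-1))) *
              algebraMap R (Localization (nonZeroDivisors R)) (d α) ^ (-n - 2).toNat) *
            ((!![0, 1; -(algebraMap R (Localization (nonZeroDivisors R)) (d α)),
                  algebraMap R (Localization (nonZeroDivisors R)) (F α)] :
                Matrix (Fin 2) (Fin 2) (Localization (nonZeroDivisors R))) ^ n).mulVec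
              ![algebraMap R (Localization (nonZeroDivisors R)) (F (β 0)),
                algebraMap R (Localization (nonZeroDivisors R)) (F (β 1))] 1 =
          algebraMap R (Localization (nonZeroDivisors R)) (F (β (n + 1)))) := by
  -- basic value facts
  have hβ0 : β 0 = γR := Subtype.ext (by rw [hβpos 0 le_rfl]; simp)
  have hβm1 : β (-1) = γL := Subtype.ext (by rw [hβneg (-1) (by norm_num)]; norm_num)
  -- Farey pairs
  have hmed1 : α.val.1 = γL.val.1 + γR.val.1 := by rw [hmed]; rfl
  have hmed2 : α.val.2 = γL.val.2 + γR.val.2 := by rw [hmed]; rfl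
  have pairall : ∀ n : ℤ, FareyPair α.val (β n).val := by
    intro n
    rcases le_or_gt 0 n with hn | hn
    · have h1 : (β n).val.1 = γR.val.1 + n * α.val.1 := by
        rw [hβpos n hn]; simp [smul_eq_mul]
      have h2 : (β n).val.2 = γR.val.2 + n * α.val.2 := by
        rw [hβpos n hn]; simp [smul_eq_mul]
      rcases hpar with h | h
      · left; rw [h1, h2, hmed1, hmed2]; linear_combination h
      · right; rw [h1, h2, hmed1, hmed2]; linear_combination h
    · have h1 : (β n).val.1 = γL.val.1 + (-n - 1) * α.val.1 := by
        rw [hβneg n hn]; simp [smul_eq_mul]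
      have h2 : (β n).val.2 = γL.val.2 + (-n - 1) * α.val.2 := by
        rw [hβneg n hn]; simp [smul_eq_mul]
      rcases hpar with h | h
      · right; rw [h1, h2, hmed1, hmed2]; linear_combination -h
      · left; rw [h1, h2, hmed1, hmed2]; linear_combination -h
  -- recurrences
  have recpos : ∀ n : ℤ, 0 ≤ n → F (β (n + 2)) = -d α * F (β n) + F α * F (β (n + 1)) := by
    intro n hn
    refine hF α (β n) (pairall n) (β (n + 1)) (β (n + 2)) ?_ ?_
    · rw [hβpos (n + 1) (by omega), hβpos n hn]
      exact FRF_addsmul _ _ _ _ rfl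
    · rw [hβpos (n + 2) (by omega), hβpos n hn,
        FRF_addsmul γR.val α.val (n + 2) (n + 1) (by ring),
        FRF_addsmul γR.val α.val (n + 1) n rfl]
  have recneg : ∀ n : ℤ, n ≤ -1 → F (β (n - 2)) = -d α * F (β n) + F α * F (β (n - 1)) := by
    intro n hn
    refine hF α (β n) (pairall n) (β (n - 1)) (β (n - 2)) ?_ ?_
    · rw [hβneg (n - 1) (by omega), hβneg n (by omega)]
      exact FRF_addsmul _ _ _ _ (by ring)
    · rw [hβneg (n - 2) (by omega), hβneg n (by omega),
        FRF_addsmul γL.val α.val (-(n - 2) - 1) (-n) (by ring),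
        FRF_addsmul γL.val α.val (-n) (-n - 1) (by ring)]
  have hparsymm : FareyPair γR.val γL.val := by
    rcases hpar with h | h
    · right; linear_combination -h
    · left; linear_combination -h
  have cross1 : F (β 1) = -d γR * F (β (-1)) + F γR * F α := by
    rw [hβm1]
    refine hF γR γL hparsymm α (β 1) hmed ?_
    rw [hβpos 1 (by norm_num), one_smul, hmed]; ring
  have cross2 : F (β (-2)) = -d γL * F (β 0) + F (β (-1)) * F α := by
    rw [hβm1, hβ0]
    refine hF γL γR hpar α (β (-2)) (by rw [hmed]; ring) ?_
    rw [hβneg (-2) (by norm_num), show (-(-2 : ℤ) - 1) = (1 : ℤ) by ring, one_smul, hmed]; ring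
  have ddL : d α = d γL * d γR := hd γL γR hpar α hmed
  -- localization setup
  set K := Localization (nonZeroDivisors R) with hK
  have huα : IsUnit (algebraMap R K (d α)) :=
    IsLocalization.map_units K (⟨d α, hnzd α⟩ : nonZeroDivisors R)
  have huL : IsUnit (algebraMap R K (d γL)) :=
    IsLocalization.map_units K (⟨d γL, hnzd γL⟩ : nonZeroDivisors R)
  set φ := algebraMap R K with hφ
  set M : Matrix (Fin 2) (Fin 2) K := !![0, 1; -(φ (d α)), φ (F α)] with hM
  set v : Fin 2 → K := ![φ (F (β 0)), φ (F (β 1))] with hv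
  have hudet : IsUnit M.det := by
    rw [hM, Matrix.det_fin_two_of]; simpa using huα
  have hMv : ∀ x : Fin 2 → K, M.mulVec x = ![x 1, -(φ (d α)) * x 0 + φ (F α) * x 1] := by
    intro x; rw [hM]; exact FRF_mulvec2 K _ _ x
  -- positive side
  have hpos : ∀ k : ℕ, (M ^ (k : ℤ)).mulVec v = ![φ (F (β (k : ℤ))), φ (F (β ((k : ℤ) + 1)))] := by
    intro k
    induction k with
    | zero => rw [Nat.cast_zero, zpow_zero, Matrix.one_mulVec, hv]; norm_num
    | succ k ih =>
      rw [show ((k + 1 : ℕ) : ℤ) = 1 + (k : ℤ) by push_cast; ring,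
        Matrix.zpow_one_add hudet, ← Matrix.mulVec_mulVec, ih, hMv]
      simp only [Matrix.cons_val_zero, Matrix.cons_val_one, Matrix.head_cons]
      refine FRF_vec2_eq _ _ _ _ ?_ ?_
      · rw [show (1 : ℤ) + (k : ℤ) = (k : ℤ) + 1 by ring]
      · have h := congrArg φ (recpos k k.cast_nonneg)
        simp only [map_add, map_mul, map_neg] at h
        rw [show (1 : ℤ) + (k : ℤ) + 1 = (k : ℤ) + 2 by ring]
        linear_combination -h
  -- negative side
  set x : ℕ → Fin 2 → K := fun j => (M ^ (-(j : ℤ))).mulVec v with hxd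
  have hx0 : x 0 = v := by
    rw [hxd]; simp only [Nat.cast_zero, neg_zero, zpow_zero, Matrix.one_mulVec]
  have hxs : ∀ j : ℕ, M.mulVec (x (j + 1)) = x j := by
    intro j
    have h := Matrix.zpow_one_add hudet (-((j : ℤ) + 1))
    rw [show (1 + -((j : ℤ) + 1)) = -(j : ℤ) by ring] at h
    rw [hxd]
    simp only
    rw [show (-((j : ℕ) + 1 : ℕ) : ℤ) = -((j : ℤ) + 1) by push_cast; ring, Matrix.mulVec_mulVec, ← h]
  have hB : ∀ j : ℕ, x (j + 1) 1 = x j 0 := by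
    intro j
    have h := congrFun (hxs j) 0
    rw [hMv] at h
    simpa using h
  have hC : ∀ j : ℕ, φ (d α) * x (j + 1) 0 = φ (F α) * x (j + 1) 1 - x j 1 := by
    intro j
    have h := congrFun (hxs j) 1
    rw [hMv] at h
    simp only [Matrix.cons_val_one, Matrix.head_cons, Matrix.cons_val_zero] at h
    linear_combination -h
  have hv0 : v 0 = φ (F (β 0)) := rfl
  have hv1 : v 1 = φ (F (β 1)) := rfl
  -- A j : first components on the negative side
  have hA0 : φ (d γL) * x 1 0 = φ (F (β (-1))) := by
    refine huα.mul_left_cancel ?_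
    have h := hC 0
    rw [hB 0, hx0, hv0, hv1] at h
    have hr : d α * F (β (-1)) = d γL * (F α * F (β 0) - F (β 1)) := by
      have c1' := cross1
      rw [hβm1] at c1'
      rw [hβm1, hβ0]
      linear_combination F γL * ddL + d γL * c1' 
    have hr' := congrArg φ hr
    simp only [map_mul, map_sub] at hr'
    linear_combination φ (d γL) * h - hr'
  have hA1 : φ (d γL) * φ (d α) * x 2 0 = φ (F (β (-2))) := by
    have h := hC 1
    rw [hB 1] at h
    have h1 := hB 0
    rw [hx0, hv0] at h1
    rw [h1] at h
    have hr' := congrArg φ cross2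
    simp only [map_add, map_mul, map_neg] at hr'
    linear_combination φ (d γL) * h + φ (F α) * hA0 - hr'
  have hA : ∀ j : ℕ, φ (d γL) * φ (d α) ^ j * x (j + 1) 0 = φ (F (β (-(j : ℤ) - 1))) := by
    have key : ∀ j : ℕ,
        (φ (d γL) * φ (d α) ^ j * x (j + 1) 0 = φ (F (β (-(j : ℤ) - 1)))) ∧
        (φ (d γL) * φ (d α) ^ (j + 1) * x (j + 2) 0 = φ (F (β (-(j : ℤ) - 2)))) := by
      intro j
      induction j with
      | zero =>
        constructor
        · rw [Nat.cast_zero, pow_zero, mul_one]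
          simpa using hA0
        · rw [Nat.cast_zero, pow_one]
          simpa using hA1
      | succ k ih =>
        constructor
        · rw [show (-((k + 1 : ℕ) : ℤ) - 1) = -(k : ℤ) - 2 by push_cast; ring]
          exact ih.2
        · rw [show (-((k + 1 : ℕ) : ℤ) - 2) = -(k : ℤ) - 3 by push_cast; ring]
          have h := hC (k + 2)
          rw [hB (k + 2), hB (k + 1)] at h
          have hr := recneg (-(k : ℤ) - 1) (by omega)
          rw [show (-(k : ℤ) - 1 - 2) = -(k : ℤ) - 3 by ring,
            show (-(k : ℤ) - 1 - 1) = -(k : ℤ) - 2 by ring] at hr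
          have hr' := congrArg φ hr
          simp only [map_add, map_mul, map_neg] at hr'
          have e1 := ih.1
          have e2 := ih.2
          rw [show k + 1 + 2 = k + 3 by omega, show k + 1 + 1 = k + 2 by omega]
          rw [show k + 2 + 1 = k + 3 by omega] at h
          linear_combination (φ (d γL) * φ (d α) ^ (k + 1)) * h + φ (F α) * e2 -
            φ (d α) * e1 - hr'
    exact fun j => (key j).1
  -- assemble
  intro n
  refine ⟨?_, ?_, ?_⟩
  · intro hn
    lift n to ℕ using hn with k
    exact hpos k
  · intro hn
    subst hn
    have hx1 : (M ^ (-1 : ℤ)).mulVec v = x 1 := by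
      rw [hxd]; norm_num
    constructor
    · rw [hx1, hβm1]
      have h0 := hA0
      rw [hβm1] at h0
      simpa using h0
    · rw [hx1]
      have h := hB 0
      rw [hx0, hv0] at h
      exact h
  · intro hn
    obtain ⟨j, hj⟩ : ∃ j : ℕ, n = -(j : ℤ) - 2 := ⟨(-n - 2).toNat, by omega⟩
    subst hj
    have hxj : (M ^ (-(j : ℤ) - 2)).mulVec v = x (j + 2) := by
      rw [hxd]
      simp only
      rw [show (-((j + 2 : ℕ)) : ℤ) = -(j : ℤ) - 2 by push_cast; ring]
    have ht1 : (-(-(j : ℤ) - 2) - 1).toNat = j + 1 := by omega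
    have ht2 : (-(-(j : ℤ) - 2) - 2).toNat = j := by omega
    constructor
    · rw [hxj, ht1, hβm1]
      have h1 := hA (j + 1)
      rw [show (-((j + 1 : ℕ) : ℤ) - 1) = -(j : ℤ) - 2 by push_cast; ring,
        show j + 1 + 1 = j + 2 by omega] at h1
      exact h1
    · rw [hxj, ht2, hβm1]
      rw [show (-(j : ℤ) - 2 + 1) = -(j : ℤ) - 1 by ring]
      rw [show j + 2 = j + 1 + 1 from rfl, hB (j + 1)]
      exact hA j
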